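/- arXiv:1504.00382 — 3 statements merged into one kernel-verified Lean document; each statement's English description precedes it below -/
import Mathlib

section
/- Let u(t) = Σ_{k=1}^∞ 2^{-k} exp(i 2^k t) (the Weierstrass-type lacunary series). Then ω(h) = h·log(1/h) is a modulus of continuity for u: there exists a constant C > 0 such that |u(t+h) − u(t)| ≤ C·h·log(1/h) for all real t and all sufficiently small h > 0. -/
open scoped Real

/-- The Weierstrass-type lacunary series `u(t) = ∑_{k=1}^∞ 2^{-k} exp(i 2^k t)`. -/
noncomputable def weierstrassU (t : ℝ) : ℂ :=
  ∑' k : ℕ, (2 : ℂ) ^ (-((k : ℤ) + 1)) * Complex.exp (Complex.I * 2 ^ (k + 1) * (t : ℂ))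

lemma aux_norm_exp_sub_one_le (x : ℝ) :
    ‖Complex.exp ((x : ℂ) * Complex.I) - 1‖ ≤ min 2 (2 * |x|) := by
  have hnorm : ‖Complex.exp ((x : ℂ) * Complex.I)‖ = 1 := by
    rw [Complex.norm_exp]
    simp
  have h2 : ‖Complex.exp ((x : ℂ) * Complex.I) - 1‖ ≤ 2 := by
    calc ‖Complex.exp ((x : ℂ) * Complex.I) - 1‖
        ≤ ‖Complex.exp ((x : ℂ) * Complex.I)‖ + ‖(1 : ℂ)‖ := norm_sub_le _ _
      _ = 2 := by rw [hnorm]; norm_num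
  refine le_min h2 ?_
  rcases le_or_gt (|x|) 1 with hx | hx
  · have habs : ‖(x : ℂ) * Complex.I‖ ≤ 1 := by
      rw [norm_mul, Complex.norm_I, Complex.norm_real]; simpa using hx
    have := Complex.norm_exp_sub_one_le habs
    rw [norm_mul, Complex.norm_I, Complex.norm_real] at this
    simpa using this
  · nlinarith [h2, abs_nonneg x]

lemma aux_summable (t : ℝ) :
    Summable (fun k : ℕ =>
      (2 : ℂ) ^ (-((k : ℤ) + 1)) * Complex.exp (Complex.I * 2 ^ (k + 1) * (t : ℂ))) := by
  refine Summable.of_norm_bounded (g := fun k : ℕ => (1 / 2 : ℝ) ^ k) ?_ ?_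
  · exact summable_geometric_of_lt_one (by norm_num) (by norm_num)
  · intro k
    have h1 : ‖(2 : ℂ) ^ (-((k : ℤ) + 1))‖ = (2 : ℝ) ^ (-((k : ℤ) + 1)) := by
      rw [norm_zpow]; norm_num
    have h2 : ‖Complex.exp (Complex.I * 2 ^ (k + 1) * (t : ℂ))‖ = 1 := by
      rw [Complex.norm_exp]
      have : (Complex.I * 2 ^ (k + 1) * (t : ℂ)).re = 0 := by
        simp [Complex.mul_re, Complex.mul_im]
        left; norm_cast
      rw [this, Real.exp_zero]
    rw [norm_mul, h1, h2, mul_one]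
    have heq : (2 : ℝ) ^ (-((k : ℤ) + 1)) = (1 / 2 : ℝ) ^ (k + 1) := by
      rw [one_div, inv_pow, ← zpow_natCast (2 : ℝ) (k + 1), ← zpow_neg]
      push_cast
      ring_nf
    rw [heq]
    exact pow_le_pow_of_le_one (by norm_num) (by norm_num) (Nat.le_succ k)

lemma aux_norm_exp_eq_one (k : ℕ) (t : ℝ) :
    ‖Complex.exp (Complex.I * 2 ^ (k + 1) * (t : ℂ))‖ = 1 := by
  rw [Complex.norm_exp]
  have : (Complex.I * 2 ^ (k + 1) * (t : ℂ)).re = 0 := by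
    simp [Complex.mul_re, Complex.mul_im]
    left; norm_cast
  rw [this, Real.exp_zero]

lemma aux_zpow_eq (k : ℕ) : (2 : ℝ) ^ (-((k : ℤ) + 1)) = (1 / 2 : ℝ) ^ (k + 1) := by
  rw [one_div, inv_pow, ← zpow_natCast (2 : ℝ) (k + 1), ← zpow_neg]
  push_cast
  ring_nf

lemma aux_term_bound (t h : ℝ) (hh : 0 < h) (k : ℕ) :
    ‖(2 : ℂ) ^ (-((k : ℤ) + 1)) * Complex.exp (Complex.I * 2 ^ (k + 1) * ((t + h : ℝ) : ℂ)) -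
      (2 : ℂ) ^ (-((k : ℤ) + 1)) * Complex.exp (Complex.I * 2 ^ (k + 1) * (t : ℂ))‖ ≤
      min ((1 / 2 : ℝ) ^ k) (2 * h) := by
  set x : ℝ := 2 ^ (k + 1) * h with hx
  have hfac : Complex.exp (Complex.I * 2 ^ (k + 1) * ((t + h : ℝ) : ℂ)) =
      Complex.exp (Complex.I * 2 ^ (k + 1) * (t : ℂ)) * Complex.exp ((x : ℂ) * Complex.I) := by
    rw [← Complex.exp_add]
    congr 1
    push_cast [hx]
    ring
  have hnormc : ‖(2 : ℂ) ^ (-((k : ℤ) + 1))‖ = (1 / 2 : ℝ) ^ (k + 1) := by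
    rw [norm_zpow]
    simp only [Complex.norm_ofNat]
    exact aux_zpow_eq k
  calc ‖(2 : ℂ) ^ (-((k : ℤ) + 1)) * Complex.exp (Complex.I * 2 ^ (k + 1) * ((t + h : ℝ) : ℂ)) -
      (2 : ℂ) ^ (-((k : ℤ) + 1)) * Complex.exp (Complex.I * 2 ^ (k + 1) * (t : ℂ))‖
      = ‖(2 : ℂ) ^ (-((k : ℤ) + 1))‖ * (‖Complex.exp (Complex.I * 2 ^ (k + 1) * (t : ℂ))‖ *
          ‖Complex.exp ((x : ℂ) * Complex.I) - 1‖) := by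
        rw [hfac, ← mul_sub, ← mul_sub_one, norm_mul, norm_mul]
    _ = (1 / 2 : ℝ) ^ (k + 1) * ‖Complex.exp ((x : ℂ) * Complex.I) - 1‖ := by
        rw [hnormc, aux_norm_exp_eq_one, one_mul]
    _ ≤ (1 / 2 : ℝ) ^ (k + 1) * min 2 (2 * |x|) := by
        exact mul_le_mul_of_nonneg_left (aux_norm_exp_sub_one_le x) (by positivity)
    _ = min ((1 / 2 : ℝ) ^ (k + 1) * 2) ((1 / 2 : ℝ) ^ (k + 1) * (2 * |x|)) := by
        exact mul_min_of_nonneg _ _ (by positivity)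
    _ = min ((1 / 2 : ℝ) ^ k) (2 * h) := by
        have hxabs : |x| = 2 ^ (k + 1) * h := abs_of_pos (by positivity)
        rw [hxabs]
        congr 1
        · rw [pow_succ]; ring
        · have h21 : (1 / 2 : ℝ) ^ (k + 1) * 2 ^ (k + 1) = 1 := by
            rw [← mul_pow]; norm_num
          calc (1 / 2 : ℝ) ^ (k + 1) * (2 * (2 ^ (k + 1) * h))
              = ((1 / 2 : ℝ) ^ (k + 1) * 2 ^ (k + 1)) * (2 * h) := by ring
            _ = 2 * h := by rw [h21, one_mul]

/-- `ω(h) = h log(1/h)` is a modulus of continuity for the Weierstrass lacunary series. -/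
theorem weierstrass_modulus_of_continuity :
    ∃ C > (0 : ℝ), ∃ h₀ ∈ Set.Ioo (0 : ℝ) 1, ∀ t : ℝ, ∀ h : ℝ, 0 < h → h < h₀ →
      ‖weierstrassU (t + h) - weierstrassU t‖ ≤ C * h * Real.log (1 / h) := by
  have hlog2 : 0 < Real.log 2 := Real.log_pos (by norm_num)
  refine ⟨2 / Real.log 2 + 4, by positivity, Real.exp (-1),
    ⟨Real.exp_pos _, Real.exp_lt_one_iff.mpr (by norm_num)⟩, ?_⟩
  intro t h hh hlt
  set L : ℝ := Real.log (1 / h) with hLdef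
  have hLneg : L = -Real.log h := by rw [hLdef, one_div, Real.log_inv]
  have hL1 : 1 ≤ L := by
    have h2 : Real.log h < Real.log (Real.exp (-1)) := Real.log_lt_log hh hlt
    rw [Real.log_exp] at h2
    rw [hLneg]; linarith
  set N : ℕ := ⌈L / Real.log 2⌉₊ with hN
  have hNge : L / Real.log 2 ≤ (N : ℝ) := Nat.le_ceil _
  have hNle : (N : ℝ) ≤ L / Real.log 2 + 1 := (Nat.ceil_lt_add_one (by positivity)).le
  have hpow : (1 / 2 : ℝ) ^ N ≤ h := by
    have hLN : L ≤ N * Real.log 2 := by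
      rw [div_le_iff₀ hlog2] at hNge; linarith
    have hlogpow : Real.log ((1 / 2 : ℝ) ^ N) = -(N * Real.log 2) := by
      rw [Real.log_pow, one_div, Real.log_inv]; ring
    have : Real.log ((1 / 2 : ℝ) ^ N) ≤ Real.log h := by
      rw [hlogpow]; rw [hLneg] at hLN; linarith
    exact (Real.log_le_log_iff (by positivity) hh).mp this
  set g : ℕ → ℝ := fun k => min ((1 / 2 : ℝ) ^ k) (2 * h) with hg
  have hgeo : Summable (fun k : ℕ => (1 / 2 : ℝ) ^ k) :=
    summable_geometric_of_lt_one (by norm_num) (by norm_num)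
  have hg_sum : Summable g := by
    apply Summable.of_nonneg_of_le (fun k => le_min (by positivity) (by positivity))
      (fun k => min_le_left _ _) hgeo
  have hsub : weierstrassU (t + h) - weierstrassU t =
      ∑' k : ℕ, ((2 : ℂ) ^ (-((k : ℤ) + 1)) *
          Complex.exp (Complex.I * 2 ^ (k + 1) * ((t + h : ℝ) : ℂ)) -
        (2 : ℂ) ^ (-((k : ℤ) + 1)) * Complex.exp (Complex.I * 2 ^ (k + 1) * (t : ℂ))) := by
    rw [weierstrassU, weierstrassU]
    exact (Summable.tsum_sub (aux_summable (t + h)) (aux_summable t)).symm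
  have hbound : ‖weierstrassU (t + h) - weierstrassU t‖ ≤ ∑' k, g k := by
    rw [hsub]
    exact tsum_of_norm_bounded hg_sum.hasSum (fun k => aux_term_bound t h hh k)
  have hsplit : ∑' k, g k = ∑ i ∈ Finset.range N, g i + ∑' i, g (i + N) :=
    (Summable.sum_add_tsum_nat_add N hg_sum).symm
  have hhead : ∑ i ∈ Finset.range N, g i ≤ N * (2 * h) := by
    calc ∑ i ∈ Finset.range N, g i ≤ ∑ i ∈ Finset.range N, (2 * h) :=
          Finset.sum_le_sum (fun i _ => min_le_right _ _)
      _ = N * (2 * h) := by rw [Finset.sum_const, Finset.card_range, nsmul_eq_mul]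
  have htail_sum : Summable (fun i : ℕ => (1 / 2 : ℝ) ^ (i + N)) := by
    simpa using (summable_nat_add_iff N).mpr hgeo
  have htail : ∑' i, g (i + N) ≤ 2 * h := by
    have h1 : ∑' i, g (i + N) ≤ ∑' i : ℕ, (1 / 2 : ℝ) ^ (i + N) :=
      Summable.tsum_le_tsum (fun i => min_le_left _ _) ((summable_nat_add_iff N).mpr hg_sum) htail_sum
    have h2 : ∑' i : ℕ, (1 / 2 : ℝ) ^ (i + N) = (1 / 2 : ℝ) ^ N * 2 := by
      have : ∀ i : ℕ, (1 / 2 : ℝ) ^ (i + N) = (1 / 2 : ℝ) ^ i * (1 / 2 : ℝ) ^ N := by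
        intro i; rw [pow_add]
      rw [tsum_congr this, tsum_mul_right, tsum_geometric_of_lt_one (by norm_num) (by norm_num)]
      norm_num; ring
    have h3 : (1 / 2 : ℝ) ^ N * 2 ≤ 2 * h := by nlinarith
    calc ∑' i, g (i + N) ≤ ∑' i : ℕ, (1 / 2 : ℝ) ^ (i + N) := h1
      _ = (1 / 2 : ℝ) ^ N * 2 := h2
      _ ≤ 2 * h := h3
  calc ‖weierstrassU (t + h) - weierstrassU t‖ ≤ ∑' k, g k := hbound
    _ = ∑ i ∈ Finset.range N, g i + ∑' i, g (i + N) := hsplit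
    _ ≤ N * (2 * h) + 2 * h := add_le_add hhead htail
    _ ≤ (2 / Real.log 2 + 4) * h * L := by
        have hN2 : (N : ℝ) * (2 * h) ≤ (L / Real.log 2 + 1) * (2 * h) :=
          mul_le_mul_of_nonneg_right hNle (by positivity)
        have : (L / Real.log 2 + 1) * (2 * h) + 2 * h = 2 * h * L / Real.log 2 + 4 * h := by
          ring
        have hfin : 2 * h * L / Real.log 2 + 4 * h ≤ (2 / Real.log 2 + 4) * h * L := by
          have h4 : 4 * h ≤ 4 * h * L := by nlinarith
          have : (2 / Real.log 2 + 4) * h * L = 2 * h * L / Real.log 2 + 4 * h * L := by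
            field_simp
          linarith
        linarith
end

section
/- Suppose f(t) = Σ_{k=1}^∞ e^{i 2^k t} defines an L¹ function on the circle ℝ/2πℤ, in the sense that there exists g ∈ L¹(ℝ/2πℤ) whose Fourier coefficients are ĝ(n) = 1 if n = 2^k for some k ≥ 1 and ĝ(n) = 0 otherwise. Then, assuming the Littlewood lower bound ∫₀^{2π}|Σ_{k=1}^m e^{i 2^k t}| dt ≥ c·log m for some c > 0 and all m ≥ 2, a contradiction follows; hence no such L¹ function g exists. -/
open scoped Real
open MeasureTheory Classical

noncomputable def efun (n : ℤ) (t : ℝ) : ℂ := Complex.exp (Complex.I * n * t)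

lemma efun_continuous (n : ℤ) : Continuous (efun n) := by
  unfold efun; fun_prop

lemma efun_sub (n : ℤ) (t s : ℝ) : efun n (t - s) = efun n t * efun (-n) s := by
  unfold efun
  rw [← Complex.exp_add]
  congr 1; push_cast; ring

lemma efun_zero (t : ℝ) : efun 0 t = 1 := by
  simp [efun]

lemma efun_integral (n : ℤ) :
    ∫ t in (0:ℝ)..(2*π), efun n t = if n = 0 then (2*π : ℂ) else 0 := by
  unfold efun
  rcases eq_or_ne n 0 with h | h
  · simp [h, Complex.ofReal_mul]
  · rw [if_neg h]
    have hc : (Complex.I * (n:ℂ)) ≠ 0 := by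
      simp [Complex.I_ne_zero]
      exact_mod_cast h
    rw [integral_exp_mul_complex hc]
    have h1 : Complex.exp (Complex.I * (n:ℂ) * ((2*π : ℝ):ℂ)) = 1 := by
      have h2 := Complex.exp_int_mul_two_pi_mul_I n
      rw [← h2]
      congr 1
      push_cast
      ring
    rw [h1]
    simp

noncomputable def Dsum (M : ℕ) (u : ℝ) : ℂ :=
  ∑ p ∈ Finset.range M, ∑ q ∈ Finset.range M, efun ((p:ℤ) - q) u

lemma Dsum_eq_sq (M : ℕ) (u : ℝ) :
    Dsum M u = ((‖∑ p ∈ Finset.range M, efun (p:ℤ) u‖^2 : ℝ) : ℂ) := by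
  have h : ((‖∑ p ∈ Finset.range M, efun (p:ℤ) u‖^2 : ℝ) : ℂ)
      = (∑ p ∈ Finset.range M, efun (p:ℤ) u) *
        (starRingEnd ℂ) (∑ q ∈ Finset.range M, efun (q:ℤ) u) := by
    rw [Complex.mul_conj']
    norm_cast
  rw [h, map_sum, Finset.sum_mul_sum]
  unfold Dsum
  refine Finset.sum_congr rfl fun p _ => Finset.sum_congr rfl fun q _ => ?_
  unfold efun
  rw [← Complex.exp_conj, ← Complex.exp_add]
  congr 1
  rw [map_mul, map_mul, Complex.conj_I, Complex.conj_ofReal, map_intCast]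
  push_cast
  ring

lemma norm_Dsum (M : ℕ) (u : ℝ) : ((‖Dsum M u‖ : ℝ) : ℂ) = Dsum M u := by
  rw [Dsum_eq_sq]
  rw [Complex.norm_real, Real.norm_eq_abs, abs_of_nonneg (sq_nonneg _)]

lemma intervalIntegrable_sum' {ι : Type*} (s : Finset ι) (f : ι → ℝ → ℂ) (a b : ℝ)
    (h : ∀ i ∈ s, IntervalIntegrable (f i) volume a b) :
    IntervalIntegrable (fun x => ∑ i ∈ s, f i x) volume a b := by
  have h2 := IntervalIntegrable.sum s h
  have : (∑ i ∈ s, f i) = fun x => ∑ i ∈ s, f i x := by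
    funext x; simp
  rwa [this] at h2

lemma expand_integral (h : ℝ → ℂ) (hh : IntervalIntegrable h volume 0 (2*π)) (M : ℕ) (t : ℝ) :
    ∫ s in (0:ℝ)..(2*π), Dsum M (t - s) * h s
      = ∑ p ∈ Finset.range M, ∑ q ∈ Finset.range M,
          efun ((p:ℤ)-q) t * ∫ s in (0:ℝ)..(2*π), efun (-((p:ℤ)-q)) s * h s := by
  have hint1 : ∀ n : ℤ, IntervalIntegrable (fun s => efun n t * (efun (-n) s * h s)) volume 0 (2*π) :=
    fun n => (hh.continuousOn_mul ((efun_continuous (-n)).continuousOn)).const_mul _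
  have key : ∀ s : ℝ, Dsum M (t - s) * h s
      = ∑ p ∈ Finset.range M, ∑ q ∈ Finset.range M,
          efun ((p:ℤ)-q) t * (efun (-((p:ℤ)-q)) s * h s) := by
    intro s
    unfold Dsum
    rw [Finset.sum_mul]
    refine Finset.sum_congr rfl fun p _ => ?_
    rw [Finset.sum_mul]
    refine Finset.sum_congr rfl fun q _ => ?_
    rw [efun_sub]; ring
  rw [intervalIntegral.integral_congr (fun s _ => key s)]
  rw [intervalIntegral.integral_finset_sum (μ := volume) (a := 0) (b := 2*π)
    (s := Finset.range M)
    (f := fun p x => ∑ q ∈ Finset.range M, efun ((p:ℤ)-q) t * (efun (-((p:ℤ)-q)) x * h x))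
    (fun p _ => intervalIntegrable_sum' _ _ _ _ (fun q _ => hint1 ((p:ℤ)-q)))]
  refine Finset.sum_congr rfl fun p _ => ?_
  rw [intervalIntegral.integral_finset_sum (μ := volume) (a := 0) (b := 2*π)
    (s := Finset.range M)
    (f := fun q x => efun ((p:ℤ)-q) t * (efun (-((p:ℤ)-q)) x * h x))
    (fun q _ => hint1 ((p:ℤ)-q))]
  refine Finset.sum_congr rfl fun q _ => ?_
  rw [intervalIntegral.integral_const_mul]

lemma counting (m M : ℕ) (hM : M ≤ 2^(m+1)) (t : ℝ) :
    ∑ p ∈ Finset.range M, ∑ q ∈ Finset.range M,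
      (efun ((p:ℤ)-q) t * if ∃ k : ℕ, 1 ≤ k ∧ (p:ℤ)-(q:ℤ) = 2^k then 1 else 0)
    = ∑ k ∈ Finset.Icc 1 (m+1), ((M - 2^k : ℕ):ℂ) * efun (2^k) t := by
  have step1 : ∀ p ∈ Finset.range M, ∀ q ∈ Finset.range M,
      (efun ((p:ℤ)-q) t * if ∃ k : ℕ, 1 ≤ k ∧ (p:ℤ)-(q:ℤ) = 2^k then 1 else 0)
      = ∑ k ∈ Finset.Icc 1 (m+1), if (p:ℤ)-(q:ℤ) = 2^k then efun (2^k) t else 0 := by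
    intro p hp q hq
    by_cases h : ∃ k : ℕ, 1 ≤ k ∧ (p:ℤ)-(q:ℤ) = 2^k
    · obtain ⟨k₀, hk₀1, hk₀e⟩ := h
      have hplt : p < 2^(m+1) := lt_of_lt_of_le (Finset.mem_range.mp hp) hM
      have hk₀le : k₀ ≤ m+1 := by
        by_contra hcon
        push_neg at hcon
        have h2 : 2^(m+1) < 2^k₀ := Nat.pow_lt_pow_right one_lt_two hcon
        have h3 : ((2:ℤ))^k₀ ≤ (p:ℤ) := by
          rw [← hk₀e]; omega
        have h4 : ((2^k₀ : ℕ) : ℤ) ≤ (p:ℤ) := by push_cast; exact h3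
        have h5 : 2^k₀ ≤ p := by exact_mod_cast h4
        omega
      rw [if_pos ⟨k₀, hk₀1, hk₀e⟩, mul_one]
      rw [Finset.sum_eq_single_of_mem k₀ (Finset.mem_Icc.mpr ⟨hk₀1, hk₀le⟩)]
      · rw [if_pos hk₀e, hk₀e]
      · intro b hb hbne
        rw [if_neg]
        intro he
        apply hbne
        have : (2:ℤ)^b = 2^k₀ := by rw [← he, ← hk₀e]
        have h6 : ((2^b : ℕ):ℤ) = ((2^k₀ : ℕ):ℤ) := by push_cast; exact this
        have h7 : (2:ℕ)^b = 2^k₀ := by exact_mod_cast h6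
        exact Nat.pow_right_injective (le_refl 2) h7
    · rw [if_neg h, mul_zero]
      symm
      apply Finset.sum_eq_zero
      intro k hk
      rw [if_neg]
      intro he
      exact h ⟨k, (Finset.mem_Icc.mp hk).1, he⟩
  rw [Finset.sum_congr rfl (fun p hp => Finset.sum_congr rfl (fun q hq => step1 p hp q hq))]
  have count : ∀ k : ℕ, (∑ p ∈ Finset.range M, ∑ q ∈ Finset.range M,
      (if (p:ℤ)-(q:ℤ) = 2^k then efun (2^k) t else 0)) = ((M - 2^k : ℕ):ℂ) * efun (2^k) t := by
    intro k
    rw [Finset.sum_comm]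
    have h1 : ∀ q ∈ Finset.range M, (∑ p ∈ Finset.range M,
        (if (p:ℤ)-(q:ℤ) = 2^k then efun (2^k) t else 0))
        = if q + 2^k < M then efun (2^k) t else 0 := by
      intro q hq
      have hiff : ∀ p : ℕ, ((p:ℤ)-(q:ℤ) = 2^k) ↔ p = q + 2^k := by
        intro p
        have : ((2:ℤ))^k = ((2^k : ℕ) : ℤ) := by push_cast; ring
        rw [this]
        omega
      simp_rw [hiff]
      rw [Finset.sum_ite_eq' (Finset.range M) (q + 2^k) (fun _ => efun (2^k) t)]
      simp [Finset.mem_range]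
    rw [Finset.sum_congr rfl h1]
    have hsub : Finset.range (M - 2^k) ⊆ Finset.range M := Finset.range_subset_range.mpr (Nat.sub_le _ _)
    have h2 : ∑ q ∈ Finset.range M, (if q + 2^k < M then efun (2^k) t else 0)
        = ∑ q ∈ Finset.range (M - 2^k), (if q + 2^k < M then efun (2^k) t else 0) := by
      symm
      apply Finset.sum_subset hsub
      intro x hx hnx
      simp only [Finset.mem_range] at hx hnx
      rw [if_neg (by omega)]
    have h3 : ∀ q ∈ Finset.range (M - 2^k), (if q + 2^k < M then efun (2^k) t else 0)
        = efun (2^k) t := by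
      intro q hq
      simp only [Finset.mem_range] at hq
      rw [if_pos (by omega)]
    rw [h2, Finset.sum_congr rfl h3, Finset.sum_const, Finset.card_range, nsmul_eq_mul]
  calc ∑ p ∈ Finset.range M, ∑ q ∈ Finset.range M,
        ∑ k ∈ Finset.Icc 1 (m+1), (if (p:ℤ)-(q:ℤ) = 2^k then efun (2^k) t else 0)
      = ∑ p ∈ Finset.range M, ∑ k ∈ Finset.Icc 1 (m+1), ∑ q ∈ Finset.range M,
        (if (p:ℤ)-(q:ℤ) = 2^k then efun (2^k) t else 0) :=
        Finset.sum_congr rfl fun p _ => Finset.sum_comm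
    _ = ∑ k ∈ Finset.Icc 1 (m+1), ∑ p ∈ Finset.range M, ∑ q ∈ Finset.range M,
        (if (p:ℤ)-(q:ℤ) = 2^k then efun (2^k) t else 0) := Finset.sum_comm
    _ = ∑ k ∈ Finset.Icc 1 (m+1), ((M - 2^k : ℕ):ℂ) * efun (2^k) t :=
        Finset.sum_congr rfl fun k _ => count k

lemma integral_diag (M : ℕ) (γ : ℤ → ℂ) :
    (∫ t in (0:ℝ)..(2*π), (∑ p ∈ Finset.range M, ∑ q ∈ Finset.range M,
      efun ((p:ℤ)-q) t * γ ((p:ℤ)-q)))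
    = (M : ℂ) * (2*π * γ 0) := by
  have hint1 : ∀ n : ℤ, IntervalIntegrable (fun t => efun n t * γ n) volume 0 (2*π) :=
    fun n => ((efun_continuous n).mul continuous_const).intervalIntegrable 0 (2*π)
  rw [intervalIntegral.integral_finset_sum (μ := volume) (a := 0) (b := 2*π)
    (s := Finset.range M)
    (f := fun p t => ∑ q ∈ Finset.range M, efun ((p:ℤ)-q) t * γ ((p:ℤ)-q))
    (fun p _ => intervalIntegrable_sum' _ _ _ _ (fun q _ => hint1 ((p:ℤ)-q)))]
  have step : ∀ p ∈ Finset.range M,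
      (∫ t in (0:ℝ)..(2*π), ∑ q ∈ Finset.range M, efun ((p:ℤ)-q) t * γ ((p:ℤ)-q))
      = 2*π * γ 0 := by
    intro p hp
    rw [intervalIntegral.integral_finset_sum (μ := volume) (a := 0) (b := 2*π)
      (s := Finset.range M)
      (f := fun q t => efun ((p:ℤ)-q) t * γ ((p:ℤ)-q))
      (fun q _ => hint1 ((p:ℤ)-q))]
    have term : ∀ q ∈ Finset.range M,
        (∫ t in (0:ℝ)..(2*π), efun ((p:ℤ)-q) t * γ ((p:ℤ)-q))
        = if q = p then 2*π * γ 0 else 0 := by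
      intro q _
      rw [intervalIntegral.integral_mul_const, efun_integral]
      by_cases hpq : q = p
      · subst hpq
        rw [sub_self, if_pos rfl, if_pos rfl]
      · rw [if_neg, zero_mul, if_neg hpq]
        intro hz
        apply hpq
        have h9 : (p:ℤ) = q := by omega
        exact_mod_cast h9.symm
    rw [Finset.sum_congr rfl term, Finset.sum_ite_eq' (Finset.range M) p (fun _ => 2*π*γ 0),
      if_pos (Finset.mem_range.mp hp |> fun h => Finset.mem_range.mpr h)]
  rw [Finset.sum_congr rfl step, Finset.sum_const, Finset.card_range, nsmul_eq_mul]
/-- There is no `L¹` function on the circle `ℝ/2πℤ` whose Fourier coefficients are `1`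
exactly at the lacunary frequencies `2^k`, `k ≥ 1`, and `0` otherwise — granted the
Littlewood lower bound `∫₀^{2π} |∑_{k=1}^m e^{i 2^k t}| dt ≥ c log m`. -/

theorem no_L1_function_with_lacunary_fourier_coefficients
    (g : ℝ → ℂ) (hper : Function.Periodic g (2 * π)) (hmeas : Measurable g)
    (hint : IntervalIntegrable g volume 0 (2 * π))
    (hfourier : ∀ n : ℤ,
      (1 / (2 * (π : ℂ))) * ∫ t in (0 : ℝ)..(2 * π), g t * Complex.exp (-Complex.I * (n : ℂ) * (t : ℂ))
        = if ∃ k : ℕ, 1 ≤ k ∧ n = 2 ^ k then 1 else 0)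
    (hlittlewood : ∃ c > (0 : ℝ), ∀ m : ℕ, 2 ≤ m →
      c * Real.log m ≤
        ∫ t in (0 : ℝ)..(2 * π), ‖∑ k ∈ Finset.Icc 1 m, Complex.exp (Complex.I * 2 ^ k * (t : ℂ))‖) :
    False := by
  obtain ⟨c, hc, hL⟩ := hlittlewood
  have hπ : (0:ℝ) < π := Real.pi_pos
  set B := ∫ s in (0:ℝ)..(2*π), ‖g s‖ with hBdef
  have hB0 : 0 ≤ B :=
    intervalIntegral.integral_nonneg (by positivity) (fun _ _ => norm_nonneg _)
  -- the uniform bound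
  have main : ∀ m : ℕ, 1 ≤ m →
      (∫ t in (0:ℝ)..(2*π), ‖∑ k ∈ Finset.Icc 1 m, Complex.exp (Complex.I * 2 ^ k * (t:ℂ))‖)
        ≤ 3 * B := by
    intro m hm
    set N := 2^m with hN
    have hNpos : 0 < N := Nat.pow_pos (by norm_num)
    have hNC : ((N:ℂ)) ≠ 0 := by exact_mod_cast hNpos.ne'
    have hNR : (0:ℝ) < (N:ℝ) := by exact_mod_cast hNpos
    have hpow : (2:ℕ)^(m+1) = 2*N := by rw [hN, pow_succ]; ring
    have h2N : 2*N ≤ 2^(m+1) := le_of_eq hpow.symm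
    have hNle : N ≤ 2^(m+1) := by omega
    -- Fourier hypothesis restated
    have four : ∀ n : ℤ, (1/(2*(π:ℂ))) * ∫ s in (0:ℝ)..(2*π), efun (-n) s * g s
        = if ∃ k : ℕ, 1 ≤ k ∧ n = 2^k then 1 else 0 := by
      intro n
      rw [← hfourier n]
      congr 1
      apply intervalIntegral.integral_congr
      intro s _
      unfold efun
      rw [mul_comm]
      congr 1
      push_cast
      ring
    -- convolution identity
    have conv : ∀ M : ℕ, M ≤ 2^(m+1) → ∀ t : ℝ,
        (1/(2*(π:ℂ))) * ∫ s in (0:ℝ)..(2*π), Dsum M (t - s) * g s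
        = ∑ k ∈ Finset.Icc 1 (m+1), ((M - 2^k : ℕ):ℂ) * efun (2^k) t := by
      intro M hM t
      rw [expand_integral g hint M t, Finset.mul_sum]
      refine Eq.trans (Finset.sum_congr rfl fun p _ => ?_) (counting m M hM t)
      rw [Finset.mul_sum]
      refine Finset.sum_congr rfl fun q _ => ?_
      rw [← four ((p:ℤ)-q)]
      ring
    -- continuity facts
    have hDcont : ∀ M : ℕ, Continuous (Dsum M) := fun M =>
      continuous_finset_sum _ (fun p _ => continuous_finset_sum _ (fun q _ => efun_continuous _))
    have hKer : ∀ (M:ℕ) (t:ℝ), IntervalIntegrable (fun s => Dsum M (t-s) * g s) volume 0 (2*π) :=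
      fun M t => hint.continuousOn_mul
        (((hDcont M).comp (continuous_const.sub continuous_id)).continuousOn)
    have hKerN : ∀ (M:ℕ) (t:ℝ),
        IntervalIntegrable (fun s => ‖Dsum M (t-s)‖ * ‖g s‖) volume 0 (2*π) :=
      fun M t => hint.norm.continuousOn_mul
        ((((hDcont M).comp (continuous_const.sub continuous_id)).norm).continuousOn)
    have hgC : IntervalIntegrable (fun s => ((‖g s‖:ℝ):ℂ)) volume 0 (2*π) :=
      ⟨hint.norm.1.ofReal, hint.norm.2.ofReal⟩
    have hKerC : ∀ (M:ℕ) (t:ℝ),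
        IntervalIntegrable (fun s => Dsum M (t-s) * ((‖g s‖:ℝ):ℂ)) volume 0 (2*π) :=
      fun M t => hgC.continuousOn_mul
        (((hDcont M).comp (continuous_const.sub continuous_id)).continuousOn)
    -- the key identity
    have ident : ∀ t : ℝ, (∑ k ∈ Finset.Icc 1 m, efun (2^k) t)
        = (1/(N:ℂ)) * ((1/(2*(π:ℂ))) * (∫ s in (0:ℝ)..(2*π), Dsum (2*N) (t - s) * g s)
            - (1/(2*(π:ℂ))) * (∫ s in (0:ℝ)..(2*π), Dsum N (t - s) * g s)) := by
      intro t
      rw [conv (2*N) h2N t, conv N hNle t, ← Finset.sum_sub_distrib, Finset.mul_sum]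
      have hsplit : Finset.Icc 1 (m+1) = insert (m+1) (Finset.Icc 1 m) := by
        ext x
        simp only [Finset.mem_Icc, Finset.mem_insert]
        omega
      rw [hsplit, Finset.sum_insert (by simp)]
      have e1 : (2*N - 2^(m+1) : ℕ) = 0 := by omega
      have e2 : (N - 2^(m+1) : ℕ) = 0 := by omega
      rw [e1, e2]
      simp only [Nat.cast_zero, zero_mul, sub_zero, mul_zero, zero_add]
      symm
      refine Finset.sum_congr rfl fun k hk => ?_
      have hkm : k ≤ m := (Finset.mem_Icc.mp hk).2
      have hk2 : (2:ℕ)^k ≤ N := by rw [hN]; exact Nat.pow_le_pow_right (by norm_num) hkm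
      rw [Nat.cast_sub (by omega), Nat.cast_sub hk2]
      push_cast
      field_simp
      ring
    -- norm bound for the convolution integrals
    have hA : ∀ (M:ℕ) (t:ℝ), ‖∫ s in (0:ℝ)..(2*π), Dsum M (t-s) * g s‖
        ≤ ∫ s in (0:ℝ)..(2*π), ‖Dsum M (t-s)‖ * ‖g s‖ := by
      intro M t
      refine le_trans (intervalIntegral.norm_integral_le_integral_norm (by positivity)) ?_
      exact le_of_eq (intervalIntegral.integral_congr (fun s _ => norm_mul _ _))
    -- the majorant W
    have hn2π : ‖(1/(2*(π:ℂ)))‖ = 1/(2*π) := by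
      have h0 : (1/(2*(π:ℂ))) = (((1/(2*π) : ℝ)) : ℂ) := by push_cast; ring
      rw [h0, Complex.norm_real, Real.norm_eq_abs, abs_of_pos (by positivity)]
    have hTW : ∀ t : ℝ, ‖∑ k ∈ Finset.Icc 1 m, efun (2^k) t‖
        ≤ (1/(2*π*(N:ℝ))) *
          ∫ s in (0:ℝ)..(2*π), (‖Dsum (2*N) (t-s)‖ + ‖Dsum N (t-s)‖) * ‖g s‖ := by
      intro t
      rw [ident t]
      have hsplitW : (∫ s in (0:ℝ)..(2*π), (‖Dsum (2*N) (t-s)‖ + ‖Dsum N (t-s)‖) * ‖g s‖)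
          = (∫ s in (0:ℝ)..(2*π), ‖Dsum (2*N) (t-s)‖ * ‖g s‖)
            + (∫ s in (0:ℝ)..(2*π), ‖Dsum N (t-s)‖ * ‖g s‖) := by
        rw [← intervalIntegral.integral_add (hKerN (2*N) t) (hKerN N t)]
        exact intervalIntegral.integral_congr (fun s _ => by ring)
      rw [hsplitW]
      calc ‖(1/(N:ℂ)) * ((1/(2*(π:ℂ))) * (∫ s in (0:ℝ)..(2*π), Dsum (2*N) (t - s) * g s)
              - (1/(2*(π:ℂ))) * (∫ s in (0:ℝ)..(2*π), Dsum N (t - s) * g s))‖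
          = (1/(N:ℝ)) * ‖(1/(2*(π:ℂ))) * (∫ s in (0:ℝ)..(2*π), Dsum (2*N) (t - s) * g s)
              - (1/(2*(π:ℂ))) * (∫ s in (0:ℝ)..(2*π), Dsum N (t - s) * g s)‖ := by
            rw [norm_mul]
            congr 1
            simp
        _ ≤ (1/(N:ℝ)) * ((1/(2*π)) * ‖∫ s in (0:ℝ)..(2*π), Dsum (2*N) (t - s) * g s‖
              + (1/(2*π)) * ‖∫ s in (0:ℝ)..(2*π), Dsum N (t - s) * g s‖) := by
            apply mul_le_mul_of_nonneg_left _ (by positivity)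
            refine le_trans (norm_sub_le _ _) ?_
            rw [norm_mul, norm_mul, hn2π]
        _ ≤ (1/(N:ℝ)) * ((1/(2*π)) * (∫ s in (0:ℝ)..(2*π), ‖Dsum (2*N) (t-s)‖ * ‖g s‖)
              + (1/(2*π)) * (∫ s in (0:ℝ)..(2*π), ‖Dsum N (t-s)‖ * ‖g s‖)) := by
            have h1 := hA (2*N) t
            have h2 := hA N t
            gcongr
        _ = (1/(2*π*(N:ℝ))) * ((∫ s in (0:ℝ)..(2*π), ‖Dsum (2*N) (t-s)‖ * ‖g s‖)
              + (∫ s in (0:ℝ)..(2*π), ‖Dsum N (t-s)‖ * ‖g s‖)) := by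
            rw [show (1:ℝ)/(2*π*(N:ℝ)) = 1/(N:ℝ) * (1/(2*π)) by
              rw [one_div, one_div, one_div, mul_inv]; ring]
            ring
    -- the Fourier coefficients of ‖g‖
    set γ : ℤ → ℂ := fun n => ∫ s in (0:ℝ)..(2*π), efun (-n) s * ((‖g s‖:ℝ):ℂ) with hγdef
    have hγ0 : γ 0 = ((B:ℝ):ℂ) := by
      rw [hγdef]
      simp only [neg_zero]
      rw [intervalIntegral.integral_congr
        (g := fun s => ((‖g s‖:ℝ):ℂ)) (fun s _ => by rw [efun_zero, one_mul])]
      rw [intervalIntegral.integral_ofReal]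
    -- the complex form of the majorant
    have hWc : ∀ t : ℝ,
        (((∫ s in (0:ℝ)..(2*π), (‖Dsum (2*N) (t-s)‖ + ‖Dsum N (t-s)‖) * ‖g s‖ : ℝ)) : ℂ)
        = (∑ p ∈ Finset.range (2*N), ∑ q ∈ Finset.range (2*N),
            efun ((p:ℤ)-q) t * γ ((p:ℤ)-q))
          + (∑ p ∈ Finset.range N, ∑ q ∈ Finset.range N,
            efun ((p:ℤ)-q) t * γ ((p:ℤ)-q)) := by
      intro t
      rw [← intervalIntegral.integral_ofReal]
      rw [intervalIntegral.integral_congr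
        (g := fun s => Dsum (2*N) (t-s) * ((‖g s‖:ℝ):ℂ) + Dsum N (t-s) * ((‖g s‖:ℝ):ℂ))
        (fun s _ => by
          push_cast
          rw [norm_Dsum, norm_Dsum]
          ring)]
      rw [intervalIntegral.integral_add (hKerC (2*N) t) (hKerC N t)]
      rw [expand_integral _ hgC (2*N) t, expand_integral _ hgC N t]
    -- continuity of the explicit form
    have hVcont : Continuous (fun t : ℝ =>
        ((∑ p ∈ Finset.range (2*N), ∑ q ∈ Finset.range (2*N),
            efun ((p:ℤ)-q) t * γ ((p:ℤ)-q))
          + (∑ p ∈ Finset.range N, ∑ q ∈ Finset.range N,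
            efun ((p:ℤ)-q) t * γ ((p:ℤ)-q)))) := by
      apply Continuous.add <;>
        exact continuous_finset_sum _ (fun p _ => continuous_finset_sum _
          (fun q _ => (efun_continuous _).mul continuous_const))
    have hWcont : Continuous (fun t : ℝ =>
        (∫ s in (0:ℝ)..(2*π), (‖Dsum (2*N) (t-s)‖ + ‖Dsum N (t-s)‖) * ‖g s‖ : ℝ)) := by
      have heq : (fun t : ℝ =>
          (∫ s in (0:ℝ)..(2*π), (‖Dsum (2*N) (t-s)‖ + ‖Dsum N (t-s)‖) * ‖g s‖ : ℝ))
          = fun t => (((∑ p ∈ Finset.range (2*N), ∑ q ∈ Finset.range (2*N),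
              efun ((p:ℤ)-q) t * γ ((p:ℤ)-q))
            + (∑ p ∈ Finset.range N, ∑ q ∈ Finset.range N,
              efun ((p:ℤ)-q) t * γ ((p:ℤ)-q))).re) := by
        funext t
        rw [← hWc t, Complex.ofReal_re]
      rw [heq]
      exact Complex.continuous_re.comp hVcont
    -- value of the integral of the majorant
    have hWval : (∫ t in (0:ℝ)..(2*π),
        (∫ s in (0:ℝ)..(2*π), (‖Dsum (2*N) (t-s)‖ + ‖Dsum N (t-s)‖) * ‖g s‖ : ℝ))
        = 6*π*(N:ℝ)*B := by
      have hcast : (((∫ t in (0:ℝ)..(2*π),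
          (∫ s in (0:ℝ)..(2*π), (‖Dsum (2*N) (t-s)‖ + ‖Dsum N (t-s)‖) * ‖g s‖ : ℝ)) : ℝ) : ℂ)
          = ((6*π*(N:ℝ)*B : ℝ) : ℂ) := by
        rw [← intervalIntegral.integral_ofReal]
        rw [intervalIntegral.integral_congr (fun t _ => hWc t)]
        have hi1 : IntervalIntegrable (fun t => ∑ p ∈ Finset.range (2*N),
            ∑ q ∈ Finset.range (2*N), efun ((p:ℤ)-q) t * γ ((p:ℤ)-q)) volume 0 (2*π) :=
          (continuous_finset_sum _ (fun p _ => continuous_finset_sum _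
            (fun q _ => (efun_continuous _).mul continuous_const))).intervalIntegrable _ _
        have hi2 : IntervalIntegrable (fun t => ∑ p ∈ Finset.range N,
            ∑ q ∈ Finset.range N, efun ((p:ℤ)-q) t * γ ((p:ℤ)-q)) volume 0 (2*π) :=
          (continuous_finset_sum _ (fun p _ => continuous_finset_sum _
            (fun q _ => (efun_continuous _).mul continuous_const))).intervalIntegrable _ _
        rw [intervalIntegral.integral_add hi1 hi2]
        rw [integral_diag (2*N) γ, integral_diag N γ, hγ0]
        push_cast
        ring
      exact_mod_cast hcast
    -- final chain
    have hTcont : Continuous (fun t : ℝ => ‖∑ k ∈ Finset.Icc 1 m, efun (2^k) t‖) :=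
      (continuous_finset_sum _ (fun k _ => efun_continuous _)).norm
    have Tdef : ∀ t : ℝ, (∑ k ∈ Finset.Icc 1 m, Complex.exp (Complex.I * 2^k * (t:ℂ)))
        = ∑ k ∈ Finset.Icc 1 m, efun (2^k) t := by
      intro t
      refine Finset.sum_congr rfl fun k _ => ?_
      unfold efun
      congr 1
      push_cast
      ring
    calc (∫ t in (0:ℝ)..(2*π), ‖∑ k ∈ Finset.Icc 1 m, Complex.exp (Complex.I * 2^k * (t:ℂ))‖)
        = ∫ t in (0:ℝ)..(2*π), ‖∑ k ∈ Finset.Icc 1 m, efun (2^k) t‖ :=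
          intervalIntegral.integral_congr (fun t _ => by rw [Tdef t])
      _ ≤ ∫ t in (0:ℝ)..(2*π), (1/(2*π*(N:ℝ))) *
            (∫ s in (0:ℝ)..(2*π), (‖Dsum (2*N) (t-s)‖ + ‖Dsum N (t-s)‖) * ‖g s‖ : ℝ) := by
          apply intervalIntegral.integral_mono_on (by positivity)
            (hTcont.intervalIntegrable _ _)
            ((hWcont.intervalIntegrable _ _).const_mul _)
          intro t _
          exact hTW t
      _ = (1/(2*π*(N:ℝ))) * (6*π*(N:ℝ)*B) := by
          rw [intervalIntegral.integral_const_mul, hWval]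
      _ ≤ 3*B := by
          rw [show (1:ℝ)/(2*π*(N:ℝ)) * (6*π*(N:ℝ)*B) = 3*B by
            field_simp
            ring]
  -- derive the contradiction
  set m := max 2 (Nat.ceil (Real.exp ((3*B+1)/c))) with hmdef
  have hm2 : 2 ≤ m := le_max_left _ _
  have h1 := hL m hm2
  have h2 := main m (by omega)
  have h3 : Real.exp ((3*B+1)/c) ≤ (m:ℝ) := by
    refine le_trans (Nat.le_ceil _) ?_
    exact_mod_cast Nat.cast_le.mpr (le_max_right 2 _)
  have h4 : (3*B+1)/c ≤ Real.log m := by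
    rw [← Real.log_exp ((3*B+1)/c)]
    exact Real.log_le_log (Real.exp_pos _) h3
  have h5 : 3*B + 1 ≤ c * Real.log m := by
    have h6 := mul_le_mul_of_nonneg_left h4 hc.le
    rwa [mul_div_cancel₀ _ hc.ne'] at h6
  have h7 : (∫ t in (0 : ℝ)..(2 * π), ‖∑ k ∈ Finset.Icc 1 m,
      Complex.exp (Complex.I * 2 ^ k * (t : ℂ))‖) ≤ 3 * B := h2
  linarith
end

section
/- Let A: L^∞(X, μ) → L^∞(X, μ) be a bounded linear operator on the bounded measurable functions over a probability space that is a ring homomorphism with unit (A(fg) = A(f)A(g) pointwise a.e. and A(1) = 1), and suppose A is represented by a measurable family of finite measures K(x, ·) via A f(x) = ∫ f(y) K(x, dy) for a.e. x. Then for a.e. x, K(x, ·) is a Dirac measure: there exists a measurable map Φ: X → X with A f(x) = f(Φ(x)) for a.e. x, for every f ∈ L^∞. -/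
open MeasureTheory

lemma eq_dirac_of_singleton_compl_null {X : Type*} [MeasurableSpace X]
    [MeasurableSingletonClass X] (ν : Measure X) [IsProbabilityMeasure ν] {y : X}
    (h : ν {y}ᶜ = 0) : ν = Measure.dirac y := by
  ext s hs
  rw [Measure.dirac_apply' _ hs]
  by_cases hy : y ∈ s
  · have hsc : ν sᶜ = 0 := by
      refine measure_mono_null (fun z hz => ?_) h
      simp only [Set.mem_compl_iff, Set.mem_singleton_iff]
      rintro rfl
      exact hz hy
    have : ν s = 1 := by
      have := measure_add_measure_compl (μ := ν) hs
      simpa [hsc] using this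
    simp [this, Set.indicator_of_mem hy]
  · have : ν s = 0 := by
      refine measure_mono_null (fun z hz => ?_) h
      simp only [Set.mem_compl_iff, Set.mem_singleton_iff]
      rintro rfl
      exact hy hz
    simp [this, Set.indicator_of_notMem hy]

/-- A multiplicative unital operator on `L^∞` represented by a measurable family of
probability measures `K(x, ·)` is a measurable change of variables: the kernel is a.e.
a Dirac measure `δ_{Φ(x)}`, so `A f(x) = ∫ f dK(x,·) = f(Φ(x))` a.e. for every bounded
measurable `f`. -/
theorem multiplicative_kernel_is_dirac
    {X : Type*} [MeasurableSpace X] [StandardBorelSpace X] [Nonempty X]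
    (μ : Measure X) [IsProbabilityMeasure μ]
    (K : X → Measure X) (hK : Measurable K)
    (hprob : ∀ᵐ x ∂μ, IsProbabilityMeasure (K x))
    (hmult : ∀ f : X → ℝ, Measurable f → (∃ C, ∀ y, |f y| ≤ C) →
      ∀ᵐ x ∂μ, ∫ y, (f y) ^ 2 ∂(K x) = (∫ y, f y ∂(K x)) ^ 2) :
    ∃ Φ : X → X, Measurable Φ ∧ (∀ᵐ x ∂μ, K x = Measure.dirac (Φ x)) ∧
      ∀ f : X → ℝ, Measurable f → (∃ C, ∀ y, |f y| ≤ C) →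
        ∀ᵐ x ∂μ, ∫ y, f y ∂(K x) = f (Φ x) := by
  obtain ⟨e, he⟩ := exists_measurableEmbedding_real X
  set g : X → ℝ := fun y => Real.arctan (e y) with hg_def
  have hg_meas : Measurable g := Real.measurable_arctan.comp he.measurable
  have hg_inj : Function.Injective g := Real.arctan_injective.comp he.injective
  have hpi : Real.pi ≤ 4 := Real.pi_le_four
  have hg_bdd : ∀ y, |g y| ≤ 2 := by
    intro y
    have h1 := Real.arctan_lt_pi_div_two (e y)
    have h2 := Real.neg_pi_div_two_lt_arctan (e y)
    rw [abs_le]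
    constructor <;> [nlinarith; nlinarith]
  obtain ⟨r, hr_meas, hr⟩ := he.exists_measurable_extend measurable_id
    (fun _ => ‹Nonempty X›)
  set m : X → ℝ := fun x => (∫⁻ y, ENNReal.ofReal (g y + 2) ∂(K x)).toReal - 2 with hm_def
  have hm_meas : Measurable m := by
    apply Measurable.sub_const
    exact ENNReal.measurable_toReal.comp
      ((Measure.measurable_lintegral
        (ENNReal.measurable_ofReal.comp (hg_meas.add_const 2))).comp hK)
  have htan : Measurable Real.tan := by
    have : Real.tan = fun x => Real.sin x / Real.cos x := funext Real.tan_eq_sin_div_cos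
    rw [this]; exact Real.measurable_sin.div Real.measurable_cos
  set Φ : X → X := fun x => r (Real.tan (m x)) with hΦ_def
  have hΦ_meas : Measurable Φ := hr_meas.comp (htan.comp hm_meas)
  have key : ∀ᵐ x ∂μ, K x = Measure.dirac (Φ x) := by
    filter_upwards [hprob, hmult g hg_meas ⟨2, hg_bdd⟩] with x hx hvar
    haveI := hx
    have hint : Integrable g (K x) := by
      refine Integrable.mono' (integrable_const 2) hg_meas.aestronglyMeasurable ?_
      exact Filter.Eventually.of_forall hg_bdd
    set c := ∫ y, g y ∂(K x) with hc_def
    have hint2 : Integrable (fun y => g y ^ 2) (K x) := by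
      refine Integrable.mono' (integrable_const 4) (hg_meas.pow_const 2).aestronglyMeasurable ?_
      refine Filter.Eventually.of_forall fun y => ?_
      have := hg_bdd y
      rw [abs_le] at this
      rw [Real.norm_eq_abs, abs_of_nonneg (sq_nonneg _)]
      nlinarith [this.1, this.2]
    have hzero : ∫ y, (g y - c) ^ 2 ∂(K x) = 0 := by
      have hexp : (fun y => (g y - c) ^ 2)
          = fun y => (g y ^ 2 - (2 * c) * g y) + c ^ 2 := by
        funext y; ring
      have hI : Integrable (fun y => g y ^ 2 - 2 * c * g y) (K x) :=
        hint2.sub (hint.const_mul (2 * c))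
      rw [hexp, integral_add hI (integrable_const _),
        integral_sub hint2 (hint.const_mul (2 * c)), integral_const_mul,
        integral_const, probReal_univ]
      simp only [ENNReal.toReal_one, one_smul, ← hc_def]
      rw [hvar]; ring
    have hae : ∀ᵐ y ∂(K x), g y = c := by
      have hnn : 0 ≤ᵐ[K x] fun y => (g y - c) ^ 2 :=
        Filter.Eventually.of_forall fun y => sq_nonneg _
      have hint3 : Integrable (fun y => (g y - c) ^ 2) (K x) := by
        have : (fun y => (g y - c) ^ 2)
            = fun y => (g y ^ 2 - (2 * c) * g y) + c ^ 2 := by funext y; ring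
        rw [this]
        exact (hint2.sub (hint.const_mul (2 * c))).add (integrable_const _)
      have := (integral_eq_zero_iff_of_nonneg_ae hnn hint3).mp hzero
      filter_upwards [this] with y hy
      have : (g y - c) ^ 2 = 0 := hy
      have := pow_eq_zero_iff (n := 2) (by norm_num) |>.mp this
      linarith [sub_eq_zero.mp this]
    -- the level set {g = c} has full measure, hence is nonempty
    have hs_meas : MeasurableSet {y | g y = c} := hg_meas (measurableSet_singleton c)
    have hfull : K x {y | g y = c} = 1 := by
      have hcompl : K x {y | g y = c}ᶜ = 0 := by
        rw [Set.compl_setOf]; exact ae_iff.mp hae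
      have := measure_add_measure_compl (μ := K x) hs_meas
      simpa [hcompl] using this
    have hne : {y | g y = c}.Nonempty := by
      by_contra hemp
      rw [Set.not_nonempty_iff_eq_empty] at hemp
      rw [hemp] at hfull
      simp at hfull
    obtain ⟨y₀, hy₀⟩ := hne
    have hgy₀ : g y₀ = c := hy₀
    have hnull : K x {y₀}ᶜ = 0 := by
      refine measure_mono_null (fun z hz => ?_) (ae_iff.mp hae)
      simp only [Set.mem_compl_iff, Set.mem_singleton_iff] at hz
      show ¬ g z = c
      intro hgz
      exact hz (hg_inj (by rw [hgz, hgy₀] : g z = g y₀))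
    have hdirac : K x = Measure.dirac y₀ := eq_dirac_of_singleton_compl_null (K x) hnull
    -- compute m x = c
    have hm_eq : m x = c := by
      have hpos : 0 ≤ᵐ[K x] fun y => g y + 2 := by
        refine Filter.Eventually.of_forall fun y => ?_
        simp only [Pi.zero_apply]
        have := (abs_le.mp (hg_bdd y)).1; linarith
      have h1 : ∫ y, (g y + 2) ∂(K x)
          = (∫⁻ y, ENNReal.ofReal (g y + 2) ∂(K x)).toReal :=
        integral_eq_lintegral_of_nonneg_ae hpos
          ((hg_meas.add_const 2)).aestronglyMeasurable
      have h2 : ∫ y, (g y + 2) ∂(K x) = c + 2 := by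
        rw [integral_add hint (integrable_const _), integral_const, probReal_univ]
        simp [hc_def]
      rw [hm_def]
      simp only
      rw [← h1, h2]; ring
    have hΦx : Φ x = y₀ := by
      rw [hΦ_def]
      simp only
      rw [hm_eq, ← hgy₀, hg_def]
      simp only
      rw [Real.tan_arctan]
      have : r (e y₀) = y₀ := congrFun hr y₀
      simpa using this
    rw [hΦx]; exact hdirac
  refine ⟨Φ, hΦ_meas, key, fun f hf _ => ?_⟩
  filter_upwards [key] with x hx
  rw [hx, integral_dirac]
end
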